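/- Let p: Q → Q be a rational quasi-polynomial p(r) = p_n r^n + sum_{i=0}^{n-1} p_i(r) r^i of degree n >= 1 with constant nonzero leading coefficient p_n and period d > 0 (each p_i periodic with period d). Suppose there is an open interval (r_1, r_2) ⊂ Q and constants c_k in Q with p(r + kd) = c_k for all r in (r_1, r_2) and all k in Z_{>=0}. Then each p_i restricted to (r_1, r_2) is a polynomial of degree n - i; moreover, if p_n > 0 then the leading coefficient of p_{n-1} on (r_1,r_2) is negative. -/

import Mathlib

open Pointwise

/-- A point of `ℚⁿ` is a lattice point if all its coordinates are integers. -/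
def IsLatticePt {n : ℕ} (x : Fin n → ℚ) : Prop := ∀ i, ∃ z : ℤ, x i = (z : ℚ)

/-- The number of lattice points in the dilate `r • P`. -/
noncomputable def latticeCount {n : ℕ} (P : Set (Fin n → ℚ)) (r : ℚ) : ℕ :=
  Set.ncard {x | x ∈ r • P ∧ IsLatticePt x}

/-- A rational polytope: the convex hull of finitely many rational points. -/
def IsRatPolytope {n : ℕ} (P : Set (Fin n → ℚ)) : Prop :=
  ∃ V : Finset (Fin n → ℚ), P = convexHull ℚ (V : Set (Fin n → ℚ))

/-- The dimension of a set, as the dimension of its affine hull. -/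
noncomputable def polyDim {n : ℕ} (P : Set (Fin n → ℚ)) : ℕ :=
  Module.finrank ℚ (vectorSpan ℚ P)

/-- `F` is a face of the polytope `P`. -/
def IsFace {n : ℕ} (P F : Set (Fin n → ℚ)) : Prop :=
  F = P ∨ ∃ (f : (Fin n → ℚ) →ₗ[ℚ] ℚ) (c : ℚ),
    (∀ x ∈ P, f x ≤ c) ∧ F = {x | x ∈ P ∧ f x = c}

/-- `F` is an `i`-dimensional (nonempty) face of `P`. -/
def IsIFace {n : ℕ} (P F : Set (Fin n → ℚ)) (i : ℕ) : Prop :=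
  IsFace P F ∧ F.Nonempty ∧ polyDim F = i

/-- The dilated affine hull `r • aff(F)` contains a lattice point. -/
def DilAffHasLattice {n : ℕ} (F : Set (Fin n → ℚ)) (r : ℚ) : Prop :=
  ∃ x ∈ r • (affineSpan ℚ F : Set (Fin n → ℚ)), IsLatticePt x

/-- `k` is the `i`-index `d_i(P)`: the smallest positive integer such that
`k • aff(F)` contains a lattice point for every `i`-face `F` of `P`. -/
def IsIIndex {n : ℕ} (P : Set (Fin n → ℚ)) (i : ℕ) (k : ℕ) : Prop :=
  0 < k ∧ (∀ F, IsIFace P F i → DilAffHasLattice F (k : ℚ)) ∧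
    ∀ k' : ℕ, 0 < k' → (∀ F, IsIFace P F i → DilAffHasLattice F (k' : ℚ)) → k ≤ k'

/-- `q` is the rational `i`-index `rd_i(P)`: the smallest positive rational such that
`q • aff(F)` contains a lattice point for every `i`-face `F` of `P`. -/
def IsRatIIndex {n : ℕ} (P : Set (Fin n → ℚ)) (i : ℕ) (q : ℚ) : Prop :=
  0 < q ∧ (∀ F, IsIFace P F i → DilAffHasLattice F q) ∧
    ∀ q' : ℚ, 0 < q' → (∀ F, IsIFace P F i → DilAffHasLattice F q') → q ≤ q'

/-- An integral polytope: the convex hull of finitely many lattice points. -/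
def IsIntegralPolytope {n : ℕ} (P : Set (Fin n → ℚ)) : Prop :=
  ∃ V : Finset (Fin n → ℚ), (∀ v ∈ V, IsLatticePt v) ∧
    P = convexHull ℚ (V : Set (Fin n → ℚ))

/-- `q` is the rational denominator `q(P)`: the smallest positive rational such that
`q • P` is an integral polytope. -/
def IsRatDenom {n : ℕ} (P : Set (Fin n → ℚ)) (q : ℚ) : Prop :=
  0 < q ∧ IsIntegralPolytope (q • P) ∧
    ∀ q' : ℚ, 0 < q' → IsIntegralPolytope (q' • P) → q ≤ q'

/-- `f` is periodic with period `d`. -/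
def IsPeriodic (f : ℚ → ℚ) (d : ℚ) : Prop := ∀ r, f (r + d) = f r

/-- `Q` is a family of coefficient functions of the rational Ehrhart quasi-polynomial
of `P` (of degree `d`): each `Q i` is periodic with some positive period and
`#(rP ∩ ℤⁿ) = ∑_{i=0}^{d} Q_i(P,r) rⁱ` for all rational `r ≥ 0`. -/
def IsRatEhrhartCoeffs {n : ℕ} (P : Set (Fin n → ℚ)) (d : ℕ) (Q : ℕ → ℚ → ℚ) : Prop :=
  (∀ i, ∃ p : ℚ, 0 < p ∧ IsPeriodic (Q i) p) ∧
  ∀ r : ℚ, 0 ≤ r → (latticeCount P r : ℚ) = ∑ i ∈ Finset.range (d + 1), Q i r * r ^ i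

/-- `G` is the family of coefficient functions of the classical Ehrhart quasi-polynomial
of `P` (of degree `d`): each `G i` is periodic with some positive integer period and
`#(kP ∩ ℤⁿ) = ∑_{i=0}^{d} G_i(P,k) kⁱ` for all integers `k ≥ 0`. -/
def IsEhrhartCoeffs {n : ℕ} (P : Set (Fin n → ℚ)) (d : ℕ) (G : ℕ → ℕ → ℚ) : Prop :=
  (∀ i, ∃ p : ℕ, 0 < p ∧ ∀ k, G i (k + p) = G i k) ∧
  ∀ k : ℕ, (latticeCount P (k : ℚ) : ℚ) = ∑ i ∈ Finset.range (d + 1), G i k * (k : ℚ) ^ i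

open Polynomial

/-- a rational quasi-polynomial with constant nonzero leading coefficient
which is constant on translates `(r₁ + kd, r₂ + kd)` of an interval has coefficients
which are polynomials of degree `n - i` on `(r₁, r₂)`; if the leading coefficient is
positive, the leading coefficient of `p_{n-1}` is negative. -/
theorem stmt7 (n : ℕ) (hn : 1 ≤ n) (pn : ℚ) (hpn : pn ≠ 0)
    (p : ℕ → ℚ → ℚ) (d : ℚ) (hd : 0 < d) (hper : ∀ i < n, IsPeriodic (p i) d)
    (r1 r2 : ℚ) (hr : r1 < r2) (c : ℕ → ℚ)
    (hc : ∀ r : ℚ, r1 < r → r < r2 → ∀ k : ℕ,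
      pn * (r + k * d) ^ n +
        ∑ i ∈ Finset.range n, p i (r + k * d) * (r + k * d) ^ i = c k) :
    ∃ q : ℕ → Polynomial ℚ,
      (∀ i < n, (q i).natDegree = n - i ∧
        ∀ r : ℚ, r1 < r → r < r2 → p i r = (q i).eval r) ∧
      (0 < pn → (q (n - 1)).leadingCoeff < 0) := by
  set r0 : ℚ := (r1 + r2) / 2 with hr0def
  have hr01 : r1 < r0 := by rw [hr0def]; linarith
  have hr02 : r0 < r2 := by rw [hr0def]; linarith
  have hperk : ∀ i < n, ∀ r : ℚ, ∀ k : ℕ, p i (r + k * d) = p i r := by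
    intro i hi r k
    induction k with
    | zero => simp
    | succ k ih =>
        rw [show r + ((k:ℕ)+1 : ℕ) * d = (r + k*d) + d by push_cast; ring,
          hper i hi (r + k*d), ih]
  set P : ℚ → ℚ[X] := fun r => C pn * X ^ n + ∑ i ∈ Finset.range n, C (p i r) * X ^ i with hP
  have hPeval : ∀ r, r1 < r → r < r2 → ∀ k : ℕ, (P r).eval (r + k * d) = c k := by
    intro r h1 h2 k
    rw [← hc r h1 h2 k]
    simp only [hP, eval_add, eval_mul, eval_pow, eval_C, eval_X, eval_finset_sum]
    congr 1
    refine Finset.sum_congr rfl fun i hi => ?_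
    rw [hperk i (Finset.mem_range.mp hi) r k]
  set B : ℚ[X] := (P r0).comp (X + C r0) with hB
  have hcomp : ∀ r, r1 < r → r < r2 → (P r).comp (X + C r) = B := by
    intro r h1 h2
    have h0 : (P r).comp (X + C r) - B = 0 := by
      apply Polynomial.eq_zero_of_infinite_isRoot
      apply Set.Infinite.mono (s := Set.range fun k : ℕ => (k : ℚ) * d)
      · rintro x ⟨k, rfl⟩
        simp only [Set.mem_setOf_eq, IsRoot, eval_sub, hB, eval_comp, eval_add, eval_X, eval_C]
        rw [show (k:ℚ) * d + r = r + k * d by ring, show (k:ℚ) * d + r0 = r0 + k * d by ring,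
          hPeval r h1 h2 k, hPeval r0 hr01 hr02 k, sub_self]
      · apply Set.infinite_range_of_injective
        intro a b hab
        have : (a : ℚ) = b := by
          exact mul_right_cancel₀ (ne_of_gt hd) hab
        exact_mod_cast this
    exact sub_eq_zero.mp h0
  have hPr : ∀ r, r1 < r → r < r2 → P r = B.comp (X - C r) := by
    intro r h1 h2
    conv_lhs => rw [show P r = ((P r).comp (X + C r)).comp (X - C r) by
      rw [comp_assoc]; simp]
    rw [hcomp r h1 h2]
  have hcoeffP : ∀ r k, (P r).coeff k =
      (if k = n then pn else 0) + (if k < n then p k r else 0) := by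
    intro r k
    simp only [hP, coeff_add, coeff_C_mul, coeff_X_pow, finset_sum_coeff,
      mul_ite, mul_one, mul_zero, Finset.sum_ite_eq, Finset.mem_range]
  have hPdeg : ∀ r, (P r).natDegree = n := by
    intro r
    refine le_antisymm (natDegree_le_iff_coeff_eq_zero.mpr fun N hN => ?_)
      (le_natDegree_of_ne_zero ?_)
    · rw [hcoeffP, if_neg (by omega), if_neg (by omega), add_zero]
    · rw [hcoeffP, if_pos rfl, if_neg (lt_irrefl n), add_zero]; exact hpn
  have hBdeg : B.natDegree = n := by
    rw [hB, natDegree_comp, natDegree_X_add_C, mul_one, hPdeg]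
  have hBn : B.coeff n = pn := by
    have h1 : B.leadingCoeff = (P r0).leadingCoeff * (X + C r0).leadingCoeff ^ (P r0).natDegree :=
      leadingCoeff_comp (by rw [natDegree_X_add_C]; exact one_ne_zero)
    have h2 : B.leadingCoeff = pn := by
      rw [h1, (monic_X_add_C r0).leadingCoeff, one_pow, mul_one, Polynomial.leadingCoeff,
        hPdeg, hcoeffP, if_pos rfl, if_neg (lt_irrefl n), add_zero]
    rwa [Polynomial.leadingCoeff, hBdeg] at h2
  set q : ℕ → ℚ[X] := fun i =>
    ∑ j ∈ Finset.range (n+1), C (B.coeff j * (j.choose i) * (-1)^(j-i)) * X ^ (j - i) with hq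
  have hqcoeff : ∀ i k, (q i).coeff k =
      ∑ j ∈ Finset.range (n+1),
        (B.coeff j * (j.choose i) * (-1)^(j-i)) * (if k = j - i then 1 else 0) := by
    intro i k
    simp only [hq, finset_sum_coeff, coeff_C_mul, coeff_X_pow]
  have hqtop : ∀ i < n, (q i).coeff (n - i) = pn * (n.choose i) * (-1)^(n-i) := by
    intro i hi
    rw [hqcoeff, Finset.sum_eq_single n]
    · rw [hBn, if_pos rfl, mul_one]
    · intro j hj hjn
      have hj' := Finset.mem_range.mp hj
      rw [if_neg (by omega), mul_zero]
    · intro h; exact absurd (Finset.mem_range.mpr (by omega)) h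
  have hqdeg : ∀ i < n, (q i).natDegree = n - i := by
    intro i hi
    refine le_antisymm (natDegree_le_iff_coeff_eq_zero.mpr fun N hN => ?_)
      (le_natDegree_of_ne_zero ?_)
    · rw [hqcoeff]
      apply Finset.sum_eq_zero
      intro j hj
      have hj' := Finset.mem_range.mp hj
      rw [if_neg (by omega), mul_zero]
    · rw [hqtop i hi]
      have h1 : (n.choose i : ℚ) ≠ 0 :=
        Nat.cast_ne_zero.mpr (Nat.choose_pos hi.le).ne'
      exact mul_ne_zero (mul_ne_zero hpn h1) (pow_ne_zero _ (by norm_num))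
  have heval : ∀ i < n, ∀ r, r1 < r → r < r2 → p i r = (q i).eval r := by
    intro i hi r h1 h2
    have h3 : p i r = (P r).coeff i := by
      rw [hcoeffP, if_neg (by omega), if_pos hi, zero_add]
    have hBexp : B.comp (X - C r) = ∑ j ∈ Finset.range (n+1), C (B.coeff j) * (X - C r)^j := by
      rw [comp, eval₂_eq_sum_range, hBdeg]
    rw [h3, hPr r h1 h2, hBexp]
    simp only [finset_sum_coeff, coeff_C_mul, hq, eval_finset_sum, eval_mul, eval_C,
      eval_pow, eval_X]
    refine Finset.sum_congr rfl fun j hj => ?_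
    have h4 : ((X - C r)^j).coeff i = (-r)^(j-i) * (j.choose i : ℚ) := by
      rw [sub_eq_add_neg, ← C_neg, coeff_X_add_C_pow]
    rw [h4, neg_pow]
    ring
  refine ⟨q, fun i hi => ⟨hqdeg i hi, heval i hi⟩, fun hpnpos => ?_⟩
  have h1 : n - 1 < n := by omega
  have hch : (n.choose (n-1)) = n := by
    rw [Nat.choose_symm hn, Nat.choose_one_right]
  have h2 : (q (n-1)).leadingCoeff = pn * n * (-1)^(n-(n-1)) := by
    rw [Polynomial.leadingCoeff, hqdeg (n-1) h1, show n - (n-1) = n - (n-1) from rfl]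
    rw [show (n - (n-1)) = n - (n-1) from rfl]
    have := hqtop (n-1) h1
    rw [this, hch]
  rw [h2, show n - (n-1) = 1 by omega, pow_one]
  have hn1 : (1:ℚ) ≤ n := by exact_mod_cast hn
  nlinarith
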